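/- arXiv:2108.13204 — 2 statements merged into one kernel-verified Lean document; each statement's English description precedes it below -/
import Mathlib

section
/- 5R_{2,6} + 2R_{3,5} = 1798·ζ(3)·ζ(5) − (17/72)π⁸, where R_{p,q} = ∑_{n≥1} H_{n-1}^{(p)}/(n−1/2)^q with H_n^{(r)} = ∑_{k=1}^n 1/k^r. -/
/-- odd harmonic numbers of order r: h_n^{(r)} = ∑_{k=1}^n 1/(k-1/2)^r -/
noncomputable def oddH (r n : ℕ) : ℝ := ∑ k ∈ Finset.range n, (((k : ℝ) + 1/2) ^ r)⁻¹

/-- generalized harmonic numbers of order r: H_n^{(r)} = ∑_{k=1}^n 1/k^r -/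
noncomputable def genH (r n : ℕ) : ℝ := ∑ k ∈ Finset.range n, (((k : ℝ) + 1) ^ r)⁻¹

/-- T_{p,q} = ∑_{n≥1} h_{n-1}^{(p)}/(n-1/2)^q -/
noncomputable def Tsum (p q : ℕ) : ℝ := ∑' n : ℕ, oddH p n / ((n : ℝ) + 1/2) ^ q

/-- S̃_{p,q} = ∑_{n≥1} h_n^{(p)}/n^q -/
noncomputable def Ssum (p q : ℕ) : ℝ := ∑' n : ℕ, oddH p (n + 1) / ((n : ℝ) + 1) ^ q

/-- R_{p,q} = ∑_{n≥1} H_{n-1}^{(p)}/(n-1/2)^q -/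
noncomputable def Rsum (p q : ℕ) : ℝ := ∑' n : ℕ, genH p n / ((n : ℝ) + 1/2) ^ q

/-- t̃(s) = ∑_{n≥1} 1/(n-1/2)^s -/
noncomputable def ttv (s : ℕ) : ℝ := ∑' n : ℕ, (((n : ℝ) + 1/2) ^ s)⁻¹

/-- ζ(s) = ∑_{n≥1} 1/n^s (for integer s ≥ 2) -/
noncomputable def zv (s : ℕ) : ℝ := ∑' n : ℕ, (((n : ℝ) + 1) ^ s)⁻¹

open Finset Real Function

set_option maxHeartbeats 1000000

section Aux

lemma pow_sq_le {x y : ℝ} (hx : 0 ≤ x) (h1 : 1 ≤ 2*y) (hxy : x ≤ 2*y) {t : ℕ} (ht : 2 ≤ t) :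
    x^2 ≤ 2^t * y^t := by
  calc x^2 ≤ (2*y)^2 := by nlinarith
    _ ≤ (2*y)^t := pow_le_pow_right₀ h1 ht
    _ = 2^t * y^t := mul_pow _ _ _

lemma summable_sq : Summable (fun n : ℕ => (((n:ℝ)+1)^2)⁻¹) := by
  have h := Real.summable_nat_pow_inv.mpr (by norm_num : 1 < 2)
  have := (summable_nat_add_iff (f := fun n : ℕ => (((n:ℝ))^2)⁻¹) 1).2 h
  refine this.congr fun n => ?_
  push_cast
  ring_nf

lemma summable_base (c : ℝ) (hc : 1/2 ≤ c) {s : ℕ} (hs : 2 ≤ s) :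
    Summable (fun n : ℕ => (((n:ℝ) + c) ^ s)⁻¹) := by
  refine Summable.of_nonneg_of_le (fun n => by positivity) (fun n => ?_)
    (summable_sq.mul_left (2^s))
  have hn : (0:ℝ) ≤ (n:ℝ) := n.cast_nonneg
  have hcp : (0:ℝ) < (n:ℝ) + c := by linarith
  have key : ((n:ℝ)+1)^2 ≤ 2^s * ((n:ℝ)+c)^s :=
    pow_sq_le (by linarith) (by linarith) (by linarith) hs
  have hp : (0:ℝ) < ((n:ℝ)+1)^2 := by positivity
  have hq : (0:ℝ) < ((n:ℝ)+c)^s := pow_pos hcp s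
  rw [← one_div, show (2:ℝ)^s * ((((n:ℝ))+1)^2)⁻¹ = 2^s/(((n:ℝ)+1)^2) from
    (div_eq_mul_inv _ _).symm, div_le_div_iff₀ hq hp]
  nlinarith [key]

lemma summable_pair (c : ℝ) (hc : 1/2 ≤ c) {k l : ℕ} (hk : 1 ≤ k) (hl : 2 ≤ l)
    (hkl : 4 ≤ k + l) :
    Summable (fun p : ℕ × ℕ => (((p.1:ℝ)+c)^k * ((p.1:ℝ)+(p.2:ℝ)+3/2)^l)⁻¹) := by
  have hprod : Summable (fun p : ℕ×ℕ => (((p.1:ℝ)+1)^2)⁻¹ * (((p.2:ℝ)+1)^2)⁻¹) :=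
    summable_sq.mul_of_nonneg summable_sq (fun n => by positivity) (fun n => by positivity)
  refine Summable.of_nonneg_of_le (fun p => ?_) (fun p => ?_) (hprod.mul_left (2^(k+l)))
  · have hM : (0:ℝ) ≤ (p.1:ℝ) := p.1.cast_nonneg
    have hN : (0:ℝ) ≤ (p.2:ℝ) := p.2.cast_nonneg
    have h1 : (0:ℝ) < (p.1:ℝ)+c := by linarith
    have h2 : (0:ℝ) < (p.1:ℝ)+(p.2:ℝ)+3/2 := by linarith
    exact inv_nonneg.2 (le_of_lt (mul_pos (pow_pos h1 k) (pow_pos h2 l)))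
  · set M := (p.1:ℝ) with hMdef
    set N := (p.2:ℝ) with hNdef
    have hM : (0:ℝ) ≤ M := p.1.cast_nonneg
    have hN : (0:ℝ) ≤ N := p.2.cast_nonneg
    have h1 : (0:ℝ) < M+c := by linarith
    have h2 : (0:ℝ) < M+N+3/2 := by linarith
    have key : (M+1)^2 * (N+1)^2 ≤ 2^(k+l) * ((M+c)^k * (M+N+3/2)^l) := by
      by_cases hk2 : 2 ≤ k
      · have A : (M+1)^2 ≤ 2^k * (M+c)^k :=
          pow_sq_le (by linarith) (by linarith) (by linarith) hk2
        have B : (N+1)^2 ≤ 2^l * (M+N+3/2)^l :=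
          pow_sq_le (by linarith) (by linarith) (by linarith) hl
        calc (M+1)^2 * (N+1)^2 ≤ (2^k * (M+c)^k) * (2^l * (M+N+3/2)^l) :=
              mul_le_mul A B (by positivity) (by positivity)
          _ = 2^(k+l) * ((M+c)^k * (M+N+3/2)^l) := by rw [pow_add]; ring
      · have hk1 : k = 1 := by omega
        obtain ⟨l', rfl⟩ : ∃ l', l = l' + 1 := ⟨l - 1, by omega⟩
        have hl' : 2 ≤ l' := by omega
        have A : (M+1)^2 ≤ 2*(M+c) * (M+N+3/2) := by nlinarith
        have B : (N+1)^2 ≤ 2^l' * (M+N+3/2)^l' :=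
          pow_sq_le (by linarith) (by linarith) (by linarith) hl'
        have hpos : (0:ℝ) ≤ (M+c) * (M+N+3/2)^(l'+1) := by positivity
        calc (M+1)^2 * (N+1)^2 ≤ (2*(M+c)*(M+N+3/2)) * (2^l' * (M+N+3/2)^l') :=
              mul_le_mul A B (by positivity) (by positivity)
          _ = 2^(l'+1) * ((M+c) * (M+N+3/2)^(l'+1)) := by rw [pow_succ, pow_succ]; ring
          _ ≤ 2^(k+(l'+1)) * ((M+c) * (M+N+3/2)^(l'+1)) := by
              refine mul_le_mul_of_nonneg_right (pow_le_pow_right₀ one_le_two (by omega)) hpos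
          _ = 2^(k+(l'+1)) * ((M+c)^k * (M+N+3/2)^(l'+1)) := by rw [hk1]; ring
    have hp : (0:ℝ) < (M+1)^2 * (N+1)^2 := by positivity
    have hq : (0:ℝ) < (M+c)^k * (M+N+3/2)^l := by positivity
    rw [show (2:ℝ)^(k+l) * (((M+1)^2)⁻¹ * ((N+1)^2)⁻¹) =
        2^(k+l) / ((M+1)^2 * (N+1)^2) by rw [div_eq_mul_inv, mul_inv], ← one_div,
      div_le_div_iff₀ hq hp]
    nlinarith [key]

/-- The master rearrangement: the double sum equals the harmonic-weighted single sum. -/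
lemma hasSum_core (c : ℝ) (hc : 1/2 ≤ c) {k l : ℕ} (hk : 1 ≤ k) (hl : 2 ≤ l)
    (hkl : 4 ≤ k + l) :
    HasSum (fun n : ℕ => (∑ m ∈ Finset.range n, (((m:ℝ)+c)^k)⁻¹) / ((n:ℝ)+1/2)^l)
      (∑' p : ℕ×ℕ, (((p.1:ℝ)+c)^k * ((p.1:ℝ)+(p.2:ℝ)+3/2)^l)⁻¹) := by
  classical
  set F : ℕ×ℕ → ℝ :=
    fun q => if q.1 < q.2 then (((q.1:ℝ)+c)^k)⁻¹ * (((q.2:ℝ)+1/2)^l)⁻¹ else 0 with hF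
  set i : ℕ×ℕ → ℕ×ℕ := fun p => (p.1, p.1+p.2+1) with hi_def
  have hi : Function.Injective i := by
    intro a b h
    simp only [hi_def, Prod.mk.injEq] at h
    obtain ⟨h1, h2⟩ := h
    exact Prod.ext h1 (by omega)
  have hsupp : ∀ q ∉ Set.range i, F q = 0 := by
    intro q hq
    rw [hF]
    simp only
    rw [if_neg]
    intro hlt
    exact hq ⟨(q.1, q.2 - q.1 - 1), by simp only [hi_def]; exact Prod.ext rfl (by omega)⟩
  have hcomp : ∀ p : ℕ×ℕ, F (i p) = (((p.1:ℝ)+c)^k * ((p.1:ℝ)+(p.2:ℝ)+3/2)^l)⁻¹ := by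
    intro p
    rw [hF]
    simp only [hi_def]
    rw [if_pos (by omega : p.1 < p.1+p.2+1), mul_inv]
    push_cast
    ring_nf
  have hFsum : Summable F := by
    rw [← hi.summable_iff hsupp]
    exact (summable_pair c hc hk hl hkl).congr fun p => (hcomp p).symm
  have htsum : (∑' q, F q) = ∑' p : ℕ×ℕ, (((p.1:ℝ)+c)^k * ((p.1:ℝ)+(p.2:ℝ)+3/2)^l)⁻¹ := by
    have hsupp' : Function.support F ⊆ Set.range i := fun q hq => by
      by_contra h
      exact hq (hsupp q h)
    rw [← hi.tsum_eq hsupp']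
    exact tsum_congr hcomp
  have hFhas : HasSum F (∑' p : ℕ×ℕ, (((p.1:ℝ)+c)^k * ((p.1:ℝ)+(p.2:ℝ)+3/2)^l)⁻¹) := by
    rw [← htsum]; exact hFsum.hasSum
  have hswap : HasSum (fun q : ℕ×ℕ => F (q.2, q.1))
      (∑' p : ℕ×ℕ, (((p.1:ℝ)+c)^k * ((p.1:ℝ)+(p.2:ℝ)+3/2)^l)⁻¹) :=
    (Equiv.prodComm ℕ ℕ).hasSum_iff.mpr hFhas
  refine hswap.prod_fiberwise fun n => ?_
  have hfin : HasSum (fun m : ℕ => F (m, n)) (∑ m ∈ Finset.range n, F (m, n)) := by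
    refine hasSum_sum_of_ne_finset_zero fun m hm => ?_
    rw [hF]
    simp only
    rw [if_neg]
    simp only [Finset.mem_range, not_lt] at hm
    omega
  convert hfin using 1
  have heq : ∑ m ∈ Finset.range n, F (m, n)
      = ∑ m ∈ Finset.range n, (((m:ℝ)+c)^k)⁻¹ * (((n:ℝ)+1/2)^l)⁻¹ := by
    refine Finset.sum_congr rfl fun m hm => ?_
    rw [hF]
    simp only
    rw [if_pos (Finset.mem_range.mp hm)]
  rw [heq, div_eq_mul_inv, Finset.sum_mul]

/-- R_{k,l} as a double sum. -/
lemma hasSum_R {k l : ℕ} (hk : 1 ≤ k) (hl : 2 ≤ l) (hkl : 4 ≤ k + l) :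
    HasSum (fun p : ℕ×ℕ => (((p.1:ℝ)+1)^k * ((p.1:ℝ)+(p.2:ℝ)+3/2)^l)⁻¹) (Rsum k l) := by
  have h := hasSum_core 1 (by norm_num) hk hl hkl
  have heq : Rsum k l = ∑' p : ℕ×ℕ, (((p.1:ℝ)+1)^k * ((p.1:ℝ)+(p.2:ℝ)+3/2)^l)⁻¹ := by
    rw [Rsum]
    simp only [genH]
    exact h.tsum_eq
  rw [heq]
  exact (summable_pair 1 (by norm_num) hk hl hkl).hasSum

/-- T_{k,l} as a double sum. -/
lemma hasSum_T {k l : ℕ} (hk : 1 ≤ k) (hl : 2 ≤ l) (hkl : 4 ≤ k + l) :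
    HasSum (fun p : ℕ×ℕ => (((p.1:ℝ)+1/2)^k * ((p.1:ℝ)+(p.2:ℝ)+3/2)^l)⁻¹) (Tsum k l) := by
  have h := hasSum_core (1/2) le_rfl hk hl hkl
  have heq : Tsum k l = ∑' p : ℕ×ℕ, (((p.1:ℝ)+1/2)^k * ((p.1:ℝ)+(p.2:ℝ)+3/2)^l)⁻¹ := by
    rw [Tsum]
    simp only [oddH]
    exact h.tsum_eq
  rw [heq]
  exact (summable_pair (1/2) le_rfl hk hl hkl).hasSum

/-- T_{k,l} as a double sum, with coordinates swapped. -/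
lemma hasSum_T' {k l : ℕ} (hk : 1 ≤ k) (hl : 2 ≤ l) (hkl : 4 ≤ k + l) :
    HasSum (fun p : ℕ×ℕ => (((p.2:ℝ)+1/2)^k * ((p.1:ℝ)+(p.2:ℝ)+3/2)^l)⁻¹) (Tsum k l) := by
  have h := (Equiv.prodComm ℕ ℕ).hasSum_iff.mpr (hasSum_T hk hl hkl)
  refine h.congr_fun fun p => ?_
  simp only [Function.comp_apply, Equiv.prodComm_apply, Prod.fst_swap, Prod.snd_swap]
  ring_nf

/-- Product of two basic sums as a double sum. -/
lemma hasSum_prod {a b : ℕ} (ha : 2 ≤ a) (hb : 2 ≤ b) {c1 c2 : ℝ}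
    (h1 : 1/2 ≤ c1) (h2 : 1/2 ≤ c2) :
    HasSum (fun p : ℕ×ℕ => (((p.1:ℝ)+c1)^a)⁻¹ * (((p.2:ℝ)+c2)^b)⁻¹)
      ((∑' n : ℕ, (((n:ℝ)+c1)^a)⁻¹) * (∑' n : ℕ, (((n:ℝ)+c2)^b)⁻¹)) := by
  have s1 := summable_base c1 h1 ha
  have s2 := summable_base c2 h2 hb
  have key : ∀ (c : ℝ), 1/2 ≤ c → ∀ (s : ℕ) (n : ℕ), (((n:ℝ)+c)^s)⁻¹ = ‖(((n:ℝ)+c)^s)⁻¹‖ := by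
    intro c hc s n
    have hn : (0:ℝ) ≤ (n:ℝ) := n.cast_nonneg
    have : (0:ℝ) < (n:ℝ)+c := by linarith
    rw [Real.norm_eq_abs, abs_of_nonneg (inv_nonneg.2 (pow_pos this s).le)]
  have n1 : Summable (fun n : ℕ => ‖(((n:ℝ)+c1)^a)⁻¹‖) :=
    s1.congr fun n => key c1 h1 a n
  have n2 : Summable (fun n : ℕ => ‖(((n:ℝ)+c2)^b)⁻¹‖) :=
    s2.congr fun n => key c2 h2 b n
  have hs := summable_mul_of_summable_norm n1 n2
  have ht := tsum_mul_tsum_of_summable_norm n1 n2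
  rw [ht]
  exact hs.hasSum

/-- Partial fraction decomposition for (2,6). -/
lemma pf26 {x y s : ℝ} (hx : 0 < x) (hy : 0 < y) (hs : s = x + y) :
    (x^2)⁻¹ * (y^6)⁻¹ =
      6*(x^1*s^7)⁻¹ + (x^2*s^6)⁻¹ +
      (((((6*(y^1*s^7)⁻¹ + 5*(y^2*s^6)⁻¹) + 4*(y^3*s^5)⁻¹) + 3*(y^4*s^4)⁻¹) + 2*(y^5*s^3)⁻¹)
        + (y^6*s^2)⁻¹) := by
  subst hs
  have hxy : (0:ℝ) < x + y := by linarith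
  field_simp
  ring

/-- Partial fraction decomposition for (3,5). -/
lemma pf35 {x y s : ℝ} (hx : 0 < x) (hy : 0 < y) (hs : s = x + y) :
    (x^3)⁻¹ * (y^5)⁻¹ =
      ((15*(x^1*s^7)⁻¹ + 5*(x^2*s^6)⁻¹) + (x^3*s^5)⁻¹) +
      ((((15*(y^1*s^7)⁻¹ + 10*(y^2*s^6)⁻¹) + 6*(y^3*s^5)⁻¹) + 3*(y^4*s^4)⁻¹) + (y^5*s^3)⁻¹) := by
  subst hs
  have hxy : (0:ℝ) < x + y := by linarith
  field_simp
  ring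

lemma E26 : zv 2 * ttv 6 =
    6*Rsum 1 7 + Rsum 2 6 +
    (((((6*Tsum 1 7 + 5*Tsum 2 6) + 4*Tsum 3 5) + 3*Tsum 4 4) + 2*Tsum 5 3) + Tsum 6 2) := by
  have hProd : HasSum (fun p : ℕ×ℕ => (((p.1:ℝ)+1)^2)⁻¹ * (((p.2:ℝ)+1/2)^6)⁻¹) (zv 2 * ttv 6) := by
    have := hasSum_prod (a := 2) (b := 6) (c1 := 1) (c2 := 1/2)
      (by norm_num) (by norm_num) (by norm_num) le_rfl
    rw [zv, ttv]
    exact this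
  have combo :
      HasSum (fun p : ℕ×ℕ =>
        6*(((p.1:ℝ)+1)^1 * ((p.1:ℝ)+(p.2:ℝ)+3/2)^7)⁻¹ +
          (((p.1:ℝ)+1)^2 * ((p.1:ℝ)+(p.2:ℝ)+3/2)^6)⁻¹ +
        (((((6*(((p.2:ℝ)+1/2)^1 * ((p.1:ℝ)+(p.2:ℝ)+3/2)^7)⁻¹ +
             5*(((p.2:ℝ)+1/2)^2 * ((p.1:ℝ)+(p.2:ℝ)+3/2)^6)⁻¹) +
             4*(((p.2:ℝ)+1/2)^3 * ((p.1:ℝ)+(p.2:ℝ)+3/2)^5)⁻¹) +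
             3*(((p.2:ℝ)+1/2)^4 * ((p.1:ℝ)+(p.2:ℝ)+3/2)^4)⁻¹) +
             2*(((p.2:ℝ)+1/2)^5 * ((p.1:ℝ)+(p.2:ℝ)+3/2)^3)⁻¹) +
             (((p.2:ℝ)+1/2)^6 * ((p.1:ℝ)+(p.2:ℝ)+3/2)^2)⁻¹))
      (6*Rsum 1 7 + Rsum 2 6 +
        (((((6*Tsum 1 7 + 5*Tsum 2 6) + 4*Tsum 3 5) + 3*Tsum 4 4) + 2*Tsum 5 3) + Tsum 6 2)) := by
    have hR17 := hasSum_R (k:=1) (l:=7) (by norm_num) (by norm_num) (by norm_num)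
    have hR26 := hasSum_R (k:=2) (l:=6) (by norm_num) (by norm_num) (by norm_num)
    have hT17 := hasSum_T' (k:=1) (l:=7) (by norm_num) (by norm_num) (by norm_num)
    have hT26 := hasSum_T' (k:=2) (l:=6) (by norm_num) (by norm_num) (by norm_num)
    have hT35 := hasSum_T' (k:=3) (l:=5) (by norm_num) (by norm_num) (by norm_num)
    have hT44 := hasSum_T' (k:=4) (l:=4) (by norm_num) (by norm_num) (by norm_num)
    have hT53 := hasSum_T' (k:=5) (l:=3) (by norm_num) (by norm_num) (by norm_num)
    have hT62 := hasSum_T' (k:=6) (l:=2) (by norm_num) (by norm_num) (by norm_num)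
    exact ((hR17.mul_left 6).add hR26).add
      ((((((hT17.mul_left 6).add (hT26.mul_left 5)).add (hT35.mul_left 4)).add
        (hT44.mul_left 3)).add (hT53.mul_left 2)).add hT62)
  refine hProd.unique (combo.congr_fun fun p => ?_)
  have hM : (0:ℝ) ≤ (p.1:ℝ) := p.1.cast_nonneg
  have hN : (0:ℝ) ≤ (p.2:ℝ) := p.2.cast_nonneg
  exact pf26 (by linarith) (by linarith) (by ring)

lemma E35 : zv 3 * ttv 5 =
    ((15*Rsum 1 7 + 5*Rsum 2 6) + Rsum 3 5) +
    ((((15*Tsum 1 7 + 10*Tsum 2 6) + 6*Tsum 3 5) + 3*Tsum 4 4) + Tsum 5 3) := by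
  have hProd : HasSum (fun p : ℕ×ℕ => (((p.1:ℝ)+1)^3)⁻¹ * (((p.2:ℝ)+1/2)^5)⁻¹) (zv 3 * ttv 5) := by
    have := hasSum_prod (a := 3) (b := 5) (c1 := 1) (c2 := 1/2)
      (by norm_num) (by norm_num) (by norm_num) le_rfl
    rw [zv, ttv]
    exact this
  have combo :
      HasSum (fun p : ℕ×ℕ =>
        ((15*(((p.1:ℝ)+1)^1 * ((p.1:ℝ)+(p.2:ℝ)+3/2)^7)⁻¹ +
           5*(((p.1:ℝ)+1)^2 * ((p.1:ℝ)+(p.2:ℝ)+3/2)^6)⁻¹) +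
           (((p.1:ℝ)+1)^3 * ((p.1:ℝ)+(p.2:ℝ)+3/2)^5)⁻¹) +
        ((((15*(((p.2:ℝ)+1/2)^1 * ((p.1:ℝ)+(p.2:ℝ)+3/2)^7)⁻¹ +
            10*(((p.2:ℝ)+1/2)^2 * ((p.1:ℝ)+(p.2:ℝ)+3/2)^6)⁻¹) +
             6*(((p.2:ℝ)+1/2)^3 * ((p.1:ℝ)+(p.2:ℝ)+3/2)^5)⁻¹) +
             3*(((p.2:ℝ)+1/2)^4 * ((p.1:ℝ)+(p.2:ℝ)+3/2)^4)⁻¹) +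
             (((p.2:ℝ)+1/2)^5 * ((p.1:ℝ)+(p.2:ℝ)+3/2)^3)⁻¹))
      (((15*Rsum 1 7 + 5*Rsum 2 6) + Rsum 3 5) +
        ((((15*Tsum 1 7 + 10*Tsum 2 6) + 6*Tsum 3 5) + 3*Tsum 4 4) + Tsum 5 3)) := by
    have hR17 := hasSum_R (k:=1) (l:=7) (by norm_num) (by norm_num) (by norm_num)
    have hR26 := hasSum_R (k:=2) (l:=6) (by norm_num) (by norm_num) (by norm_num)
    have hR35 := hasSum_R (k:=3) (l:=5) (by norm_num) (by norm_num) (by norm_num)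
    have hT17 := hasSum_T' (k:=1) (l:=7) (by norm_num) (by norm_num) (by norm_num)
    have hT26 := hasSum_T' (k:=2) (l:=6) (by norm_num) (by norm_num) (by norm_num)
    have hT35 := hasSum_T' (k:=3) (l:=5) (by norm_num) (by norm_num) (by norm_num)
    have hT44 := hasSum_T' (k:=4) (l:=4) (by norm_num) (by norm_num) (by norm_num)
    have hT53 := hasSum_T' (k:=5) (l:=3) (by norm_num) (by norm_num) (by norm_num)
    exact (((hR17.mul_left 15).add (hR26.mul_left 5)).add hR35).add
      (((((hT17.mul_left 15).add (hT26.mul_left 10)).add (hT35.mul_left 6)).add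
        (hT44.mul_left 3)).add hT53)
  refine hProd.unique (combo.congr_fun fun p => ?_)
  have hM : (0:ℝ) ≤ (p.1:ℝ) := p.1.cast_nonneg
  have hN : (0:ℝ) ≤ (p.2:ℝ) := p.2.cast_nonneg
  exact pf35 (by linarith) (by linarith) (by ring)

/-- Symmetry relation for half-integer double sums. -/
lemma mySym {a b : ℕ} (ha : 2 ≤ a) (hb : 2 ≤ b) (hab : a + b = 8) :
    ttv a * ttv b = Tsum a b + Tsum b a + ttv (a+b) := by
  classical
  have hProd : HasSum (fun p : ℕ×ℕ => (((p.1:ℝ)+1/2)^a)⁻¹ * (((p.2:ℝ)+1/2)^b)⁻¹)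
      (ttv a * ttv b) := by
    have := hasSum_prod ha hb (c1 := 1/2) (c2 := 1/2) le_rfl le_rfl
    rw [ttv, ttv]
    exact this
  set f1 : ℕ×ℕ → ℝ :=
    fun q => if q.1 < q.2 then (((q.1:ℝ)+1/2)^a)⁻¹ * (((q.2:ℝ)+1/2)^b)⁻¹ else 0 with hf1
  set f2 : ℕ×ℕ → ℝ :=
    fun q => if q.2 < q.1 then (((q.1:ℝ)+1/2)^a)⁻¹ * (((q.2:ℝ)+1/2)^b)⁻¹ else 0 with hf2
  set f3 : ℕ×ℕ → ℝ :=
    fun q => if q.1 = q.2 then (((q.1:ℝ)+1/2)^a)⁻¹ * (((q.2:ℝ)+1/2)^b)⁻¹ else 0 with hf3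
  have h1 : HasSum f1 (Tsum a b) := by
    set i : ℕ×ℕ → ℕ×ℕ := fun p => (p.1, p.1+p.2+1) with hi_def
    have hi : Function.Injective i := by
      intro u v h
      simp only [hi_def, Prod.mk.injEq] at h
      exact Prod.ext h.1 (by omega)
    have hsupp : ∀ q ∉ Set.range i, f1 q = 0 := by
      intro q hq
      rw [hf1]
      simp only
      rw [if_neg]
      intro hlt
      exact hq ⟨(q.1, q.2 - q.1 - 1), by simp only [hi_def]; exact Prod.ext rfl (by omega)⟩
    rw [← hi.hasSum_iff hsupp]
    refine (hasSum_T (k:=a) (l:=b) (by omega) hb (by omega)).congr_fun fun p => ?_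
    simp only [Function.comp_apply, hi_def, hf1]
    rw [if_pos (by omega : p.1 < p.1+p.2+1), ← mul_inv]
    push_cast
    ring_nf
  have h2 : HasSum f2 (Tsum b a) := by
    set i : ℕ×ℕ → ℕ×ℕ := fun p => (p.1+p.2+1, p.1) with hi_def
    have hi : Function.Injective i := by
      intro u v h
      simp only [hi_def, Prod.mk.injEq] at h
      exact Prod.ext h.2 (by omega)
    have hsupp : ∀ q ∉ Set.range i, f2 q = 0 := by
      intro q hq
      rw [hf2]
      simp only
      rw [if_neg]
      intro hlt
      exact hq ⟨(q.2, q.1 - q.2 - 1), by simp only [hi_def]; exact Prod.ext (by omega) rfl⟩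
    rw [← hi.hasSum_iff hsupp]
    refine (hasSum_T (k:=b) (l:=a) (by omega) ha (by omega)).congr_fun fun p => ?_
    simp only [Function.comp_apply, hi_def, hf2]
    rw [if_pos (by omega : p.1 < p.1+p.2+1), ← mul_inv]
    push_cast
    ring_nf
  have h3 : HasSum f3 (ttv (a+b)) := by
    set i : ℕ → ℕ×ℕ := fun n => (n, n) with hi_def
    have hi : Function.Injective i := by
      intro u v h
      simp only [hi_def, Prod.mk.injEq] at h
      exact h.1
    have hsupp : ∀ q ∉ Set.range i, f3 q = 0 := by
      intro q hq
      rw [hf3]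
      simp only
      rw [if_neg]
      intro heq
      exact hq ⟨q.1, by simp only [hi_def]; exact Prod.ext rfl heq⟩
    rw [← hi.hasSum_iff hsupp]
    have hbase : HasSum (fun n : ℕ => (((n:ℝ)+1/2)^(a+b))⁻¹) (ttv (a+b)) :=
      (summable_base (1/2) le_rfl (s := a+b) (by omega)).hasSum
    refine hbase.congr_fun fun n => ?_
    simp [hf3, hi_def, pow_add, mul_inv, mul_comm]
  refine hProd.unique (((h1.add h2).add h3).congr_fun fun q => ?_)
  rcases lt_trichotomy q.1 q.2 with h | h | h
  · simp [hf1, hf2, hf3, h, Nat.lt_asymm h, Nat.ne_of_lt h]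
  · simp [hf1, hf2, hf3, h, lt_irrefl]
  · simp [hf1, hf2, hf3, h, Nat.lt_asymm h, (Nat.ne_of_lt h).symm]

lemma ttv_eq {s : ℕ} (hs : 2 ≤ s) : ttv s = (2^s - 1) * zv s := by
  have hz : Summable (fun n : ℕ => (((n:ℝ)+1)^s)⁻¹) := summable_base 1 (by norm_num) hs
  have ht : Summable (fun n : ℕ => (((n:ℝ)+1/2)^s)⁻¹) := summable_base (1/2) le_rfl hs
  have hzv : HasSum (fun n : ℕ => (((n:ℝ)+1)^s)⁻¹) (zv s) := hz.hasSum
  have httv : HasSum (fun n : ℕ => (((n:ℝ)+1/2)^s)⁻¹) (ttv s) := ht.hasSum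
  have he : HasSum (fun k : ℕ => (fun n : ℕ => (((n:ℝ)+1)^s)⁻¹) (2*k))
      (((2:ℝ)^s)⁻¹ * ttv s) := by
    refine (httv.mul_left ((2:ℝ)^s)⁻¹).congr_fun fun k => ?_
    push_cast
    rw [show ((2:ℝ)*(k:ℝ)+1) = 2*((k:ℝ)+1/2) by ring, mul_pow, mul_inv]
  have ho : HasSum (fun k : ℕ => (fun n : ℕ => (((n:ℝ)+1)^s)⁻¹) (2*k+1))
      (((2:ℝ)^s)⁻¹ * zv s) := by
    refine (hzv.mul_left ((2:ℝ)^s)⁻¹).congr_fun fun k => ?_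
    push_cast
    rw [show ((2:ℝ)*(k:ℝ)+1+1) = 2*((k:ℝ)+1) by ring, mul_pow, mul_inv]
  have := (he.even_add_odd ho).unique hzv
  have h2 : (0:ℝ) < 2^s := by positivity
  field_simp at this
  linarith

lemma bernoulli'_five : bernoulli' 5 = 0 :=
  bernoulli'_eq_zero_of_odd ⟨2, by norm_num⟩ (by norm_num)

lemma bernoulli'_seven : bernoulli' 7 = 0 :=
  bernoulli'_eq_zero_of_odd ⟨3, by norm_num⟩ (by norm_num)

lemma bernoulli'_six : bernoulli' 6 = 1/42 := by
  have h2 : Nat.choose 6 2 = 15 := by decide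
  have h4 : Nat.choose 6 4 = 15 := by decide
  have h3 : Nat.choose 6 3 = 20 := by decide
  have h5 : Nat.choose 6 5 = 6 := by decide
  rw [bernoulli'_def]
  norm_num [Finset.sum_range_succ, h2, h3, h4, h5, bernoulli'_five]

lemma bernoulli'_eight : bernoulli' 8 = -1/30 := by
  have h2 : Nat.choose 8 2 = 28 := by decide
  have h3 : Nat.choose 8 3 = 56 := by decide
  have h4 : Nat.choose 8 4 = 70 := by decide
  have h5 : Nat.choose 8 5 = 56 := by decide
  have h6 : Nat.choose 8 6 = 28 := by decide
  have h7 : Nat.choose 8 7 = 8 := by decide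
  rw [bernoulli'_def]
  norm_num [Finset.sum_range_succ, h2, h3, h4, h5, h6, h7,
    bernoulli'_five, bernoulli'_six, bernoulli'_seven]

lemma zv_eq_of_hasSum {s : ℕ} {v : ℝ} (hs : s ≠ 0)
    (h : HasSum (fun n : ℕ => 1/(n:ℝ)^s) v) : zv s = v := by
  have h0 : HasSum (fun n : ℕ => 1/(n:ℝ)^s)
      (v + ∑ i ∈ Finset.range 1, 1/(i:ℝ)^s) := by
    simpa [zero_pow hs] using h
  have h1 := (hasSum_nat_add_iff (f := fun n : ℕ => 1/(n:ℝ)^s) 1).mpr h0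
  have h2 : HasSum (fun n : ℕ => (((n:ℝ)+1)^s)⁻¹) v := by
    refine h1.congr_fun fun n => ?_
    push_cast
    rw [one_div]
  exact h2.tsum_eq

lemma zv_two : zv 2 = π^2/6 := zv_eq_of_hasSum (by norm_num) hasSum_zeta_two

lemma zv_four : zv 4 = π^4/90 := zv_eq_of_hasSum (by norm_num) hasSum_zeta_four

lemma zv_six : zv 6 = π^6/945 := by
  have h := hasSum_zeta_nat (k := 3) (by norm_num)
  have := zv_eq_of_hasSum (s := 6) (by norm_num) (by exact_mod_cast h)
  rw [this, bernoulli_eq_bernoulli'_of_ne_one (by norm_num), bernoulli'_six]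
  norm_num [Nat.factorial]
  ring

lemma zv_eight : zv 8 = π^8/9450 := by
  have h := hasSum_zeta_nat (k := 4) (by norm_num)
  have := zv_eq_of_hasSum (s := 8) (by norm_num) (by exact_mod_cast h)
  rw [this, bernoulli_eq_bernoulli'_of_ne_one (by norm_num), bernoulli'_eight]
  norm_num [Nat.factorial]
  ring

theorem stmt11 : 5 * Rsum 2 6 + 2 * Rsum 3 5 = 1798 * zv 3 * zv 5 - 17 / 72 * Real.pi ^ 8 := by
  have hE26 := E26
  have hE35 := E35
  have hS26 := mySym (a := 2) (b := 6) (by norm_num) (by norm_num) (by norm_num)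
  have hS35 := mySym (a := 3) (b := 5) (by norm_num) (by norm_num) (by norm_num)
  have hS44 := mySym (a := 4) (b := 4) (by norm_num) (by norm_num) (by norm_num)
  have ht2 : ttv 2 = 3 * zv 2 := by rw [ttv_eq (by norm_num)]; norm_num
  have ht3 : ttv 3 = 7 * zv 3 := by rw [ttv_eq (by norm_num)]; norm_num
  have ht4 : ttv 4 = 15 * zv 4 := by rw [ttv_eq (by norm_num)]; norm_num
  have ht5 : ttv 5 = 31 * zv 5 := by rw [ttv_eq (by norm_num)]; norm_num
  have ht6 : ttv 6 = 63 * zv 6 := by rw [ttv_eq (by norm_num)]; norm_num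
  have ht8 : ttv 8 = 255 * zv 8 := by rw [ttv_eq (by norm_num)]; norm_num
  norm_num at hS26 hS35 hS44
  rw [ht2, ht6, ht8, zv_two, zv_six, zv_eight] at hS26
  rw [ht3, ht5, ht8, zv_eight] at hS35
  rw [ht4, ht8, zv_four, zv_eight] at hS44
  rw [ht6, zv_two, zv_six] at hE26
  rw [ht5] at hE35
  linear_combination 5 * hE26 - 2 * hE35 - 5 * hS26 - 8 * hS35 - (9/2) * hS44
end Aux
end

section
/- For integers n ≥ 0: ∑_{i=0}^{2n} (−1)^i·C(2n,i)·G_{i+4}·G_{2n+4−i}/((i+4)(2n+4−i)) = G_{2n+8}/(70(2n+8)) + G_{2n+4}/(30(2n+4)) − G_{2n+2}/(21(2n+2)), where G_n are the Genocchi numbers. -/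
/-- Genocchi numbers: G_n = 2(1-2^n)B_n, with B_n the Bernoulli numbers (B_1 = -1/2). -/
noncomputable def genocchi (n : ℕ) : ℚ := 2 * (1 - 2 ^ n) * bernoulli n

open PowerSeries Nat

noncomputable def U : ℚ⟦X⟧ := PowerSeries.mk fun k => genocchi (k + 1) / (k + 1)!
noncomputable def G : ℚ⟦X⟧ := PowerSeries.mk fun k => genocchi k / k !

theorem XU : X * U = G := by
  ext m
  cases m with
  | zero => simp [G, genocchi, coeff_mk]
  | succ k => rw [coeff_succ_X_mul]; simp [U, G, coeff_mk]

theorem Gdef : G = C (2:ℚ) * bernoulliPowerSeries ℚ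
    - C (2:ℚ) * rescale 2 (bernoulliPowerSeries ℚ) := by
  ext m
  simp only [G, coeff_mk, map_sub, coeff_C_mul, coeff_rescale, bernoulliPowerSeries, coeff_mk,
    genocchi, Algebra.algebraMap_self_apply]
  ring

theorem exp_sub_one_ne : (exp ℚ - 1 : ℚ⟦X⟧) ≠ 0 := by
  intro h
  have := congrArg (coeff (R := ℚ) 1) h
  simp [coeff_exp] at this

theorem hGE : G * (exp ℚ + 1) = 2 * X := by
  have hB := bernoulliPowerSeries_mul_exp_sub_one ℚ
  have hB2 := congrArg (rescale (2:ℚ)) hB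
  rw [map_mul, map_sub, map_one, rescale_X, show ((2:ℚ)) = ((2:ℕ):ℚ) by norm_num,
    ← exp_pow_eq_rescale_exp] at hB2
  norm_num at hB2
  rw [map_ofNat (C (R := ℚ)) 2] at hB2
  apply mul_right_cancel₀ exp_sub_one_ne
  rw [Gdef, map_ofNat (C (R := ℚ)) 2]
  linear_combination (2 * (exp ℚ + 1)) * hB - 2 * hB2

theorem hUE : U * (exp ℚ + 1) = 2 := by
  apply mul_left_cancel₀ (X_ne_zero : (X:ℚ⟦X⟧) ≠ 0)
  rw [← mul_assoc, XU, hGE]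
  ring

theorem Dexp : d⁄dX ℚ (exp ℚ) = exp ℚ := by
  ext m
  rw [coeff_derivative]
  simp [coeff_exp, factorial_succ]
  field_simp

theorem h1 : (2:ℚ⟦X⟧) * d⁄dX ℚ U = U^2 - 2*U := by
  have h := congrArg (d⁄dX ℚ) hUE
  have D2 : d⁄dX ℚ (2:ℚ⟦X⟧) = 0 := by
    rw [← map_ofNat (C (R := ℚ)) 2]; exact derivative_C
  simp only [Derivation.leibniz, map_add, smul_eq_mul, Dexp, D2,
    Derivation.map_one_eq_zero, add_zero] at h
  linear_combination U * h - U * hUE - (d⁄dX ℚ U) * hUE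

theorem D_ofNat (c : ℕ) [c.AtLeastTwo] : d⁄dX ℚ (no_index (OfNat.ofNat c) : ℚ⟦X⟧) = 0 := by
  rw [← map_ofNat (C (R := ℚ)) c]; exact derivative_C

theorem h2 : (4:ℚ⟦X⟧) * d⁄dX ℚ (d⁄dX ℚ (U)) = (4)*U^1 + (-6)*U^2 + (2)*U^3 := by
  have hd := congrArg (d⁄dX ℚ) h1
  simp only [Derivation.leibniz, Derivation.leibniz_pow, map_sub, map_add, map_neg,
    smul_eq_mul, nsmul_eq_mul, D_ofNat, mul_zero, add_zero, zero_mul, zero_add,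
    neg_zero, mul_neg, neg_neg] at hd
  linear_combination 2*hd + (((-2:ℚ⟦X⟧))*U^0 + ((2:ℚ⟦X⟧))*U^1)*h1

theorem h3 : (8:ℚ⟦X⟧) * d⁄dX ℚ (d⁄dX ℚ (d⁄dX ℚ (U))) = (-8)*U^1 + (28)*U^2 + (-24)*U^3 + (6)*U^4 := by
  have hd := congrArg (d⁄dX ℚ) h2
  simp only [Derivation.leibniz, Derivation.leibniz_pow, map_sub, map_add, map_neg,
    smul_eq_mul, nsmul_eq_mul, D_ofNat, mul_zero, add_zero, zero_mul, zero_add,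
    neg_zero, mul_neg, neg_neg] at hd
  linear_combination 2*hd + (((4:ℚ⟦X⟧))*U^0 + ((-12:ℚ⟦X⟧))*U^1 + ((6:ℚ⟦X⟧))*U^2)*h1

theorem h4 : (16:ℚ⟦X⟧) * d⁄dX ℚ (d⁄dX ℚ (d⁄dX ℚ (d⁄dX ℚ (U)))) = (16)*U^1 + (-120)*U^2 + (200)*U^3 + (-120)*U^4 + (24)*U^5 := by
  have hd := congrArg (d⁄dX ℚ) h3
  simp only [Derivation.leibniz, Derivation.leibniz_pow, map_sub, map_add, map_neg,
    smul_eq_mul, nsmul_eq_mul, D_ofNat, mul_zero, add_zero, zero_mul, zero_add,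
    neg_zero, mul_neg, neg_neg] at hd
  linear_combination 2*hd + (((-8:ℚ⟦X⟧))*U^0 + ((56:ℚ⟦X⟧))*U^1 + ((-72:ℚ⟦X⟧))*U^2 + ((24:ℚ⟦X⟧))*U^3)*h1

theorem h5 : (32:ℚ⟦X⟧) * d⁄dX ℚ (d⁄dX ℚ (d⁄dX ℚ (d⁄dX ℚ (d⁄dX ℚ (U))))) = (-32)*U^1 + (496)*U^2 + (-1440)*U^3 + (1560)*U^4 + (-720)*U^5 + (120)*U^6 := by
  have hd := congrArg (d⁄dX ℚ) h4
  simp only [Derivation.leibniz, Derivation.leibniz_pow, map_sub, map_add, map_neg,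
    smul_eq_mul, nsmul_eq_mul, D_ofNat, mul_zero, add_zero, zero_mul, zero_add,
    neg_zero, mul_neg, neg_neg] at hd
  linear_combination 2*hd + (((16:ℚ⟦X⟧))*U^0 + ((-240:ℚ⟦X⟧))*U^1 + ((600:ℚ⟦X⟧))*U^2 + ((-480:ℚ⟦X⟧))*U^3 + ((120:ℚ⟦X⟧))*U^4)*h1

theorem h6 : (64:ℚ⟦X⟧) * d⁄dX ℚ (d⁄dX ℚ (d⁄dX ℚ (d⁄dX ℚ (d⁄dX ℚ (d⁄dX ℚ (U)))))) = (64)*U^1 + (-2016)*U^2 + (9632)*U^3 + (-16800)*U^4 + (13440)*U^5 + (-5040)*U^6 + (720)*U^7 := by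
  have hd := congrArg (d⁄dX ℚ) h5
  simp only [Derivation.leibniz, Derivation.leibniz_pow, map_sub, map_add, map_neg,
    smul_eq_mul, nsmul_eq_mul, D_ofNat, mul_zero, add_zero, zero_mul, zero_add,
    neg_zero, mul_neg, neg_neg] at hd
  linear_combination 2*hd + (((-32:ℚ⟦X⟧))*U^0 + ((992:ℚ⟦X⟧))*U^1 + ((-4320:ℚ⟦X⟧))*U^2 + ((6240:ℚ⟦X⟧))*U^3 + ((-3600:ℚ⟦X⟧))*U^4 + ((720:ℚ⟦X⟧))*U^5)*h1

theorem h7 : (128:ℚ⟦X⟧) * d⁄dX ℚ (d⁄dX ℚ (d⁄dX ℚ (d⁄dX ℚ (d⁄dX ℚ (d⁄dX ℚ (d⁄dX ℚ (U))))))) = (-128)*U^1 + (8128)*U^2 + (-61824)*U^3 + (163296)*U^4 + (-201600)*U^5 + (127680)*U^6 + (-40320)*U^7 + (5040)*U^8 := by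
  have hd := congrArg (d⁄dX ℚ) h6
  simp only [Derivation.leibniz, Derivation.leibniz_pow, map_sub, map_add, map_neg,
    smul_eq_mul, nsmul_eq_mul, D_ofNat, mul_zero, add_zero, zero_mul, zero_add,
    neg_zero, mul_neg, neg_neg] at hd
  linear_combination 2*hd + (((64:ℚ⟦X⟧))*U^0 + ((-4032:ℚ⟦X⟧))*U^1 + ((28896:ℚ⟦X⟧))*U^2 + ((-67200:ℚ⟦X⟧))*U^3 + ((67200:ℚ⟦X⟧))*U^4 + ((-30240:ℚ⟦X⟧))*U^5 + ((5040:ℚ⟦X⟧))*U^6)*h1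

theorem keyPS : (26880:ℚ⟦X⟧) * (d⁄dX ℚ (d⁄dX ℚ (d⁄dX ℚ (U))))^2
    = 384 * (d⁄dX ℚ (d⁄dX ℚ (d⁄dX ℚ (d⁄dX ℚ (d⁄dX ℚ (d⁄dX ℚ (d⁄dX ℚ (U)))))))) + 896 * (d⁄dX ℚ (d⁄dX ℚ (d⁄dX ℚ (U)))) - 1280 * (d⁄dX ℚ U) := by
  linear_combination (420*(8*(d⁄dX ℚ (d⁄dX ℚ (d⁄dX ℚ (U)))) + ((-8)*U^1 + (28)*U^2 + (-24)*U^3 + (6)*U^4)))*h3 - 3*h7 - 112*h3 + 640*h1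

theorem coeff_D1U (m : ℕ) : coeff (R := ℚ) m (d⁄dX ℚ (U))
    = genocchi (m+2) / (((m:ℚ)+2) * (m ! : ℚ)) := by
  rw [coeff_derivative]
  simp only [U, coeff_mk]
  have hf : ((m+2)! : ℚ) = ((m:ℚ)+2)*((m:ℚ)+1)*(m ! : ℚ) := by
    rw [show m+2 = m+1+1 by omega, factorial_succ, factorial_succ]; push_cast; ring
  have hne : (m ! : ℚ) ≠ 0 := by exact_mod_cast factorial_ne_zero m
  rw [show m+1+1 = m+2 by omega, hf]
  have : ∀ j:ℕ, ((m:ℚ)+j+1) ≠ 0 := fun j => by positivity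
  field_simp

theorem coeff_D3U (m : ℕ) : coeff (R := ℚ) m (d⁄dX ℚ (d⁄dX ℚ (d⁄dX ℚ (U))))
    = genocchi (m+4) / (((m:ℚ)+4) * (m ! : ℚ)) := by
  rw [coeff_derivative, coeff_derivative, coeff_derivative]
  simp only [U, coeff_mk]
  have hf : ((m+4)! : ℚ) = ((m:ℚ)+4)*((m:ℚ)+3)*((m:ℚ)+2)*((m:ℚ)+1)*(m ! : ℚ) := by
    rw [show m+4 = m+3+1 by omega, factorial_succ, show m+3 = m+2+1 by omega, factorial_succ, show m+2 = m+1+1 by omega, factorial_succ, factorial_succ]; push_cast; ring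
  have hne : (m ! : ℚ) ≠ 0 := by exact_mod_cast factorial_ne_zero m
  rw [show m+1+1+1+1 = m+4 by omega, hf]
  have : ∀ j:ℕ, ((m:ℚ)+j+1) ≠ 0 := fun j => by positivity
  field_simp
  push_cast
  ring

theorem coeff_D7U (m : ℕ) : coeff (R := ℚ) m (d⁄dX ℚ (d⁄dX ℚ (d⁄dX ℚ (d⁄dX ℚ (d⁄dX ℚ (d⁄dX ℚ (d⁄dX ℚ (U))))))))
    = genocchi (m+8) / (((m:ℚ)+8) * (m ! : ℚ)) := by
  rw [coeff_derivative, coeff_derivative, coeff_derivative, coeff_derivative, coeff_derivative, coeff_derivative, coeff_derivative]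
  simp only [U, coeff_mk]
  have hf : ((m+8)! : ℚ) = ((m:ℚ)+8)*((m:ℚ)+7)*((m:ℚ)+6)*((m:ℚ)+5)*((m:ℚ)+4)*((m:ℚ)+3)*((m:ℚ)+2)*((m:ℚ)+1)*(m ! : ℚ) := by
    rw [show m+8 = m+7+1 by omega, factorial_succ, show m+7 = m+6+1 by omega, factorial_succ, show m+6 = m+5+1 by omega, factorial_succ, show m+5 = m+4+1 by omega, factorial_succ, show m+4 = m+3+1 by omega, factorial_succ, show m+3 = m+2+1 by omega, factorial_succ, show m+2 = m+1+1 by omega, factorial_succ, factorial_succ]; push_cast; ring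
  have hne : (m ! : ℚ) ≠ 0 := by exact_mod_cast factorial_ne_zero m
  rw [show m+1+1+1+1+1+1+1+1 = m+8 by omega, hf]
  have : ∀ j:ℕ, ((m:ℚ)+j+1) ≠ 0 := fun j => by positivity
  field_simp
  push_cast
  ring

theorem genocchi_odd {k : ℕ} (h : Odd k) (hk : 1 < k) : genocchi k = 0 := by
  simp [genocchi, bernoulli, bernoulli'_eq_zero_of_odd h hk]

theorem stmt16 (n : ℕ) :
    ∑ i ∈ Finset.range (2 * n + 1), (-1 : ℚ) ^ i * ((2 * n).choose i : ℚ)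
        * genocchi (i + 4) * genocchi (2 * n + 4 - i)
        / (((i + 4 : ℕ) : ℚ) * ((2 * n + 4 - i : ℕ) : ℚ))
    = genocchi (2 * n + 8) / (70 * ((2 * n + 8 : ℕ) : ℚ))
        + genocchi (2 * n + 4) / (30 * ((2 * n + 4 : ℕ) : ℚ))
        - genocchi (2 * n + 2) / (21 * ((2 * n + 2 : ℕ) : ℚ)) := by
  have K := congrArg (coeff (R := ℚ) (2*n)) keyPS
  rw [sq, ← map_ofNat (C (R := ℚ)) 26880, ← map_ofNat (C (R := ℚ)) 384, ← map_ofNat (C (R := ℚ)) 896,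
      ← map_ofNat (C (R := ℚ)) 1280] at K
  simp only [map_sub, map_add, coeff_C_mul] at K
  simp only [coeff_mul, Finset.Nat.sum_antidiagonal_eq_sum_range_succ_mk,
    Nat.succ_eq_add_one] at K
  simp only [coeff_D3U, coeff_D7U, coeff_D1U] at K
  have hsum : ∑ i ∈ Finset.range (2 * n + 1), (-1 : ℚ) ^ i * ((2 * n).choose i : ℚ)
        * genocchi (i + 4) * genocchi (2 * n + 4 - i)
        / (((i + 4 : ℕ) : ℚ) * ((2 * n + 4 - i : ℕ) : ℚ))
      = ((2*n)! : ℚ) * ∑ i ∈ Finset.range (2*n+1),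
        genocchi (i+4) / ((((i:ℕ):ℚ)+4) * ((i ! : ℕ):ℚ)) *
          (genocchi (2*n-i+4) / ((((2*n-i:ℕ):ℚ)+4) * (((2*n-i)! : ℕ):ℚ))) := by
    rw [Finset.mul_sum]
    refine Finset.sum_congr rfl fun i hi => ?_
    have hin : i ≤ 2*n := by
      have := Finset.mem_range.mp hi; omega
    rcases Nat.even_or_odd i with he | ho
    · have h4 : 2*n+4-i = 2*n-i+4 := by omega
      rw [h4, Even.neg_one_pow he, one_mul, Nat.cast_choose ℚ hin]
      have c1 : ((i+4 : ℕ):ℚ) = (i:ℚ)+4 := by push_cast; ring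
      have c2 : ((2*n-i+4 : ℕ):ℚ) = ((2*n-i:ℕ):ℚ)+4 := by push_cast; ring
      rw [c1, c2]
      have n1 : ((i:ℚ)+4) ≠ 0 := by positivity
      have n2 : (((2*n-i:ℕ):ℚ)+4) ≠ 0 := by positivity
      have n3 : ((i ! : ℕ):ℚ) ≠ 0 := by exact_mod_cast factorial_ne_zero i
      have n4 : (((2*n-i)! : ℕ):ℚ) ≠ 0 := by exact_mod_cast factorial_ne_zero (2*n-i)
      have n5 : (((2*n)! : ℕ):ℚ) ≠ 0 := by exact_mod_cast factorial_ne_zero (2*n)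
      field_simp
    · have hg : genocchi (i+4) = 0 :=
        genocchi_odd (by rcases ho with ⟨c, hc⟩; exact ⟨c+2, by omega⟩) (by omega)
      simp [hg]
  rw [hsum]
  have h26 : (26880:ℚ) ≠ 0 := by norm_num
  apply mul_left_cancel₀ h26
  rw [← mul_assoc, mul_comm (26880:ℚ) (((2*n)! : ℕ):ℚ), mul_assoc, K]
  have e1 : ((2:ℚ)*n+8) ≠ 0 := by positivity
  have e2 : ((2:ℚ)*n+4) ≠ 0 := by positivity
  have e3 : ((2:ℚ)*n+2) ≠ 0 := by positivity
  have n5 : (((2*n)! : ℕ):ℚ) ≠ 0 := by exact_mod_cast factorial_ne_zero (2*n)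
  push_cast
  field_simp
  ring
end
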